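/- arXiv:2507.13829 — 4 statements merged into one kernel-verified Lean document; each statement's English description precedes it below -/
import Mathlib

section
/- Let k ∈ ℕ and let h_k be the k-th Hermite function, i.e. the L²(ℝ)-normalized function proportional, with positive leading behavior, to H_k(t)e^{−πt²}, where H_k is the degree-k orthogonal polynomial with respect to the weight t ↦ e^{−2πt²} on ℝ. Then for every z ∈ ℂ, Spec(h_k)(z) = e^{−π|z|²} · π^k |z|^{2k} / k!. -/
open Real MeasureTheory

/-- The Gaussian-window spectrogram:
`Spec y (τ+iω) = |∫ y(t) 2^{1/4} e^{−π(t−τ)²} e^{−2iπωt} dt|²`. -/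
noncomputable def Spec (y : ℝ → ℂ) (z : ℂ) : ℝ :=
  ‖(∫ t : ℝ, y t * (((2 : ℝ) ^ ((1 : ℝ) / 4) : ℝ) : ℂ)
    * Complex.exp (-(π : ℂ) * ((t : ℂ) - (z.re : ℂ)) ^ 2)
    * Complex.exp (-2 * (π : ℂ) * Complex.I * (z.im : ℂ) * (t : ℂ)))‖ ^ 2


section SpecHermiteAux
open Polynomial Filter Topology


noncomputable def specK (c : ℂ) (t : ℝ) : ℂ := Complex.exp (-2*(π:ℂ)*((t:ℂ)-c)^2)

lemma my_integrable_pow_gauss {b : ℝ} (hb : 0 < b) (n : ℕ) :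
    Integrable (fun x : ℝ => x ^ n * Real.exp (-b * x^2)) := by
  have := integrable_rpow_mul_exp_neg_mul_sq hb (s := (n:ℝ))
    ((by norm_num : (-1:ℝ) < 0).trans_le (Nat.cast_nonneg n))
  simpa [Real.rpow_natCast] using this

lemma my_tendsto_pow_gauss_atTop {b : ℝ} (hb : 0 < b) (n : ℕ) :
    Tendsto (fun x : ℝ => x ^ n * Real.exp (-b * x^2)) atTop (𝓝 0) := by
  have hlim : Tendsto (fun x : ℝ => Real.exp (-(1/2) * x)) atTop (𝓝 0) := by
    apply Real.tendsto_exp_atBot.comp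
    exact (tendsto_const_mul_atBot_of_neg (by norm_num)).mpr tendsto_id
  have h := (rpow_mul_exp_neg_mul_sq_isLittleO_exp_neg hb (n:ℝ)).trans_tendsto hlim
  simpa [Real.rpow_natCast] using h

lemma norm_specK (c : ℂ) (t : ℝ) :
    ‖specK c t‖ = Real.exp (-2*π*((t - c.re)^2 - c.im^2)) := by
  rw [specK, Complex.norm_exp]
  congr 1
  simp only [Complex.mul_re, Complex.mul_im, Complex.sub_re, Complex.sub_im, Complex.ofReal_re,
    Complex.ofReal_im, Complex.neg_re, Complex.neg_im, Complex.mul_im, pow_two,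
    Complex.re_ofNat, Complex.im_ofNat]
  ring

lemma norm_specK_le (c : ℂ) (t : ℝ) :
    ‖specK c t‖ ≤ Real.exp (2*π*(c.re^2 + c.im^2)) * Real.exp (-π*t^2) := by
  rw [norm_specK, ← Real.exp_add, Real.exp_le_exp]
  nlinarith [Real.pi_pos, sq_nonneg (t - 2*c.re)]

lemma abs_pow_le (t : ℝ) (i d : ℕ) (hi : i ≤ 2*d) : |t|^i ≤ 1 + t^(2*d) := by
  have h2d : (0:ℝ) ≤ t^(2*d) := by rw [pow_mul]; positivity
  rcases le_or_gt (|t|) 1 with h | h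
  · have : |t|^i ≤ 1 := pow_le_one₀ (abs_nonneg t) h
    linarith
  · have h1 : |t|^i ≤ |t|^(2*d) := pow_le_pow_right₀ h.le hi
    have h2 : |t|^(2*d) = t^(2*d) := by rw [← abs_pow, abs_of_nonneg h2d]
    linarith [h2 ▸ h1]

lemma norm_eval_le (S : Polynomial ℂ) (d : ℕ) (hd : S.natDegree < d) (t : ℝ) :
    ‖S.eval (t:ℂ)‖ ≤ (∑ i ∈ Finset.range d, ‖S.coeff i‖) * (1 + t^(2*d)) := by
  rw [Polynomial.eval_eq_sum_range' hd]
  refine (norm_sum_le _ _).trans ?_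
  rw [Finset.sum_mul]
  apply Finset.sum_le_sum
  intro i hi
  rw [norm_mul, norm_pow, Complex.norm_real, Real.norm_eq_abs]
  have h1 := abs_pow_le t i d (by have : i < d := Finset.mem_range.mp hi; omega)
  have h0 : (0:ℝ) ≤ ‖S.coeff i‖ := norm_nonneg _
  have h3 : (0:ℝ) ≤ |t|^i := pow_nonneg (abs_nonneg t) i
  nlinarith

lemma norm_poly_specK_le (S : Polynomial ℂ) (c : ℂ) (d : ℕ) (hd : S.natDegree < d) (t : ℝ) :
    ‖S.eval (t:ℂ) * specK c t‖ ≤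
      ((∑ i ∈ Finset.range d, ‖S.coeff i‖) * Real.exp (2*π*(c.re^2 + c.im^2))) *
        ((1 + t^(2*d)) * Real.exp (-π*t^2)) := by
  rw [norm_mul]
  have h1 := norm_eval_le S d hd t
  have h2 := norm_specK_le c t
  have e1 : (0:ℝ) ≤ 1 + t^(2*d) := by
    have : (0:ℝ) ≤ t^(2*d) := by rw [pow_mul]; positivity
    linarith
  have e2 : (0:ℝ) ≤ ‖specK c t‖ := norm_nonneg _
  have e4 : (0:ℝ) ≤ (∑ i ∈ Finset.range d, ‖S.coeff i‖) :=
    Finset.sum_nonneg fun i _ => norm_nonneg _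
  calc ‖S.eval (t:ℂ)‖ * ‖specK c t‖
      ≤ ((∑ i ∈ Finset.range d, ‖S.coeff i‖) * (1 + t^(2*d))) * ‖specK c t‖ :=
        mul_le_mul_of_nonneg_right h1 e2
    _ ≤ ((∑ i ∈ Finset.range d, ‖S.coeff i‖) * (1 + t^(2*d))) *
          (Real.exp (2*π*(c.re^2+c.im^2)) * Real.exp (-π*t^2)) :=
        mul_le_mul_of_nonneg_left h2 (mul_nonneg e4 e1)
    _ = _ := by ring

lemma continuous_poly_specK (S : Polynomial ℂ) (c : ℂ) :
    Continuous (fun t : ℝ => S.eval (t:ℂ) * specK c t) := by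
  apply Continuous.mul
  · exact S.continuous.comp Complex.continuous_ofReal
  · exact Complex.continuous_exp.comp (by continuity)

lemma integrable_poly_specK (S : Polynomial ℂ) (c : ℂ) :
    Integrable (fun t : ℝ => S.eval (t:ℂ) * specK c t) := by
  set d := S.natDegree + 1 with hd
  have hg : Integrable (fun t : ℝ =>
      ((∑ i ∈ Finset.range d, ‖S.coeff i‖) * Real.exp (2*π*(c.re^2 + c.im^2))) *
        ((1 + t^(2*d)) * Real.exp (-π*t^2))) := by
    apply Integrable.const_mul
    have h1 : Integrable (fun t : ℝ => Real.exp (-π*t^2)) := integrable_exp_neg_mul_sq Real.pi_pos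
    have h2 := my_integrable_pow_gauss Real.pi_pos (2*d)
    simpa [add_mul, one_mul, Pi.add_def] using h1.add h2
  exact hg.mono' (continuous_poly_specK S c).aestronglyMeasurable
    (Filter.Eventually.of_forall fun t => norm_poly_specK_le S c d (by omega) t)

lemma tendsto_poly_specK_atTop (S : Polynomial ℂ) (c : ℂ) :
    Tendsto (fun t : ℝ => S.eval (t:ℂ) * specK c t) atTop (𝓝 0) := by
  rw [tendsto_zero_iff_norm_tendsto_zero]
  set d := S.natDegree + 1 with hd
  apply squeeze_zero (fun t => norm_nonneg _)
    (fun t => norm_poly_specK_le S c d (by omega) t)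
  have h0 : Tendsto (fun t : ℝ => (1 + t^(2*d)) * Real.exp (-π*t^2)) atTop (𝓝 0) := by
    have h1 : Tendsto (fun t : ℝ => Real.exp (-π*t^2)) atTop (𝓝 0) := by
      simpa using my_tendsto_pow_gauss_atTop Real.pi_pos 0
    have h2 := my_tendsto_pow_gauss_atTop Real.pi_pos (2*d)
    simpa [add_mul, one_mul] using h1.add h2
  simpa using h0.const_mul _

lemma tendsto_poly_specK_atBot (S : Polynomial ℂ) (c : ℂ) :
    Tendsto (fun t : ℝ => S.eval (t:ℂ) * specK c t) atBot (𝓝 0) := by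
  rw [tendsto_zero_iff_norm_tendsto_zero]
  set d := S.natDegree + 1 with hd
  apply squeeze_zero (fun t => norm_nonneg _)
    (fun t => norm_poly_specK_le S c d (by omega) t)
  have h0 : Tendsto (fun t : ℝ => (1 + t^(2*d)) * Real.exp (-π*t^2)) atBot (𝓝 0) := by
    have heven : ∀ t : ℝ, (1 + (-t)^(2*d)) * Real.exp (-π*(-t)^2)
        = (1 + t^(2*d)) * Real.exp (-π*t^2) := by
      intro t
      rw [pow_mul, pow_mul, neg_sq]
    have h1 : Tendsto (fun t : ℝ => (1 + t^(2*d)) * Real.exp (-π*t^2)) atTop (𝓝 0) := by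
      have h1' : Tendsto (fun t : ℝ => Real.exp (-π*t^2)) atTop (𝓝 0) := by
        simpa using my_tendsto_pow_gauss_atTop Real.pi_pos 0
      have h2 := my_tendsto_pow_gauss_atTop Real.pi_pos (2*d)
      simpa [add_mul, one_mul] using h1'.add h2
    have := h1.comp tendsto_neg_atBot_atTop
    simpa [Function.comp_def, heven] using this
  simpa using h0.const_mul _


noncomputable def specJ (S : Polynomial ℂ) (c : ℂ) : ℂ := ∫ t : ℝ, S.eval (t:ℂ) * specK c t

lemma specJ_add (S T : Polynomial ℂ) (c : ℂ) : specJ (S + T) c = specJ S c + specJ T c := by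
  unfold specJ
  simp_rw [Polynomial.eval_add, add_mul]
  exact integral_add (integrable_poly_specK S c) (integrable_poly_specK T c)

lemma specJ_sub (S T : Polynomial ℂ) (c : ℂ) : specJ (S - T) c = specJ S c - specJ T c := by
  unfold specJ
  simp_rw [Polynomial.eval_sub, sub_mul]
  exact integral_sub (integrable_poly_specK S c) (integrable_poly_specK T c)

lemma specJ_C_mul (a : ℂ) (S : Polynomial ℂ) (c : ℂ) :
    specJ (Polynomial.C a * S) c = a * specJ S c := by
  unfold specJ
  simp_rw [Polynomial.eval_mul, Polynomial.eval_C, mul_assoc]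
  exact integral_const_mul a _

lemma specJ_zero (c : ℂ) : specJ 0 c = 0 := by unfold specJ; simp

lemma specJ_sum {ι : Type*} (s : Finset ι) (F : ι → Polynomial ℂ) (c : ℂ) :
    specJ (∑ i ∈ s, F i) c = ∑ i ∈ s, specJ (F i) c := by
  unfold specJ
  rw [← integral_finset_sum s (fun i _ => integrable_poly_specK (F i) c)]
  congr 1; funext t
  rw [Polynomial.eval_finset_sum, Finset.sum_mul]

lemma hasDerivAt_poly_specK (S : Polynomial ℂ) (c : ℂ) (t : ℝ) :
    HasDerivAt (fun u : ℝ => S.eval (u:ℂ) * specK c u)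
      (((Polynomial.derivative S - Polynomial.C (4*(π:ℂ)) * (Polynomial.X - Polynomial.C c) * S).eval
        (t:ℂ)) * specK c t) t := by
  have h1 : HasDerivAt (fun u : ℝ => S.eval (u:ℂ)) ((Polynomial.derivative S).eval (t:ℂ)) t :=
    (S.hasDerivAt (t:ℂ)).comp_ofReal
  have h2 : HasDerivAt (fun u : ℝ => specK c u)
      (specK c t * (-4*(π:ℂ)*((t:ℂ) - c))) t := by
    have hinner : HasDerivAt (fun z : ℂ => -2*(π:ℂ)*(z-c)^2) (-4*(π:ℂ)*((t:ℂ)-c)) (t:ℂ) := by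
      have := (((hasDerivAt_id ((t:ℂ))).sub_const c).pow 2).const_mul (-2*(π:ℂ))
      refine this.congr_deriv ?_
      simp only [id_eq]
      norm_num
      ring
    exact (hinner.cexp).comp_ofReal
  have := h1.mul h2
  refine this.congr_deriv ?_
  simp only [Polynomial.eval_sub, Polynomial.eval_mul, Polynomial.eval_C, Polynomial.eval_X]
  ring

lemma specJ_deriv_eq_zero (S : Polynomial ℂ) (c : ℂ) :
    specJ (Polynomial.derivative S - Polynomial.C (4*(π:ℂ)) * (Polynomial.X - Polynomial.C c) * S)
      c = 0 := by
  set T := Polynomial.derivative S - Polynomial.C (4*(π:ℂ)) * (Polynomial.X - Polynomial.C c) * S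
    with hT
  set f : ℝ → ℂ := fun t => S.eval (t:ℂ) * specK c t with hf
  have hint : Integrable (fun t : ℝ => T.eval (t:ℂ) * specK c t) := integrable_poly_specK T c
  have hIoi : ∫ t in Set.Ioi (0:ℝ), T.eval (t:ℂ) * specK c t = 0 - f 0 :=
    integral_Ioi_of_hasDerivAt_of_tendsto' (fun x _ => hasDerivAt_poly_specK S c x)
      hint.integrableOn (tendsto_poly_specK_atTop S c)
  have hIic : ∫ t in Set.Iic (0:ℝ), T.eval (t:ℂ) * specK c t = f 0 - 0 :=
    integral_Iic_of_hasDerivAt_of_tendsto' (fun x _ => hasDerivAt_poly_specK S c x)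
      hint.integrableOn (tendsto_poly_specK_atBot S c)
  have := intervalIntegral.integral_Iic_add_Ioi (b := (0:ℝ)) hint.integrableOn hint.integrableOn
  unfold specJ
  rw [← this, hIoi, hIic]
  ring

lemma specJ_ibp (S : Polynomial ℂ) (c : ℂ) :
    specJ (Polynomial.derivative S) c
      = (4*(π:ℂ)) * specJ ((Polynomial.X - Polynomial.C c) * S) c := by
  have h := specJ_deriv_eq_zero S c
  rw [specJ_sub] at h
  have h2 := specJ_C_mul (4*(π:ℂ)) ((Polynomial.X - Polynomial.C c) * S) c
  rw [← mul_assoc] at h2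
  rw [h2] at h
  linear_combination h


noncomputable def Mfun : ℕ → ℝ
  | 0 => (1/2 : ℝ) ^ ((1:ℝ)/2)
  | 1 => 0
  | (j+2) => (j+1)/(4*π) * Mfun j

lemma specJ_one (c : ℂ) : specJ 1 c = ((Mfun 0 : ℝ) : ℂ) := by
  unfold specJ
  have hpt : ∀ t : ℝ, (1 : Polynomial ℂ).eval (t:ℂ) * specK c t
      = Complex.exp ((-2*(π:ℂ)) * (t:ℂ)^2 + (4*(π:ℂ)*c) * (t:ℂ) + (-2*(π:ℂ)*c^2)) := by
    intro t
    rw [Polynomial.eval_one, one_mul, specK]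
    congr 1
    ring
  simp_rw [hpt]
  rw [integral_cexp_quadratic (by simp [Real.pi_pos] : (-2*(π:ℂ)).re < 0)]
  have hpi : (π:ℂ) ≠ 0 := by exact_mod_cast Real.pi_ne_zero
  have h1 : (-2*(π:ℂ)*c^2 - (4*(π:ℂ)*c)^2 / (4 * (-2*(π:ℂ)))) = 0 := by
    field_simp
    ring
  rw [h1, Complex.exp_zero, mul_one]
  have h2 : ((π:ℂ) / -(-2*(π:ℂ))) = (((1:ℝ)/2 : ℝ) : ℂ) := by
    push_cast
    field_simp
  rw [h2]
  rw [show Mfun 0 = ((1:ℝ)/2 : ℝ)^((1:ℝ)/2) from rfl]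
  rw [Complex.ofReal_cpow (by norm_num) ((1:ℝ)/2)]
  norm_num

lemma specJ_mu (c : ℂ) : ∀ j : ℕ, specJ ((Polynomial.X - Polynomial.C c)^j) c = ((Mfun j : ℝ) : ℂ) := by
  have base1 : specJ ((Polynomial.X - Polynomial.C c)^1) c = 0 := by
    have h := specJ_ibp 1 c
    rw [Polynomial.derivative_one, specJ_zero, mul_one] at h
    have h4 : (4*(π:ℂ)) ≠ 0 := by
      simp [Real.pi_ne_zero]
    rw [pow_one]
    exact ((mul_eq_zero.mp h.symm).resolve_left h4)
  have key : ∀ j : ℕ, specJ ((Polynomial.X - Polynomial.C c)^j) c = ((Mfun j : ℝ) : ℂ) ∧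
      specJ ((Polynomial.X - Polynomial.C c)^(j+1)) c = ((Mfun (j+1) : ℝ) : ℂ) := by
    intro j
    induction j with
    | zero =>
      refine ⟨by rw [pow_zero]; exact specJ_one c, ?_⟩
      rw [base1]; norm_num [Mfun]
    | succ n ih =>
      refine ⟨ih.2, ?_⟩
      have h := specJ_ibp ((Polynomial.X - Polynomial.C c)^(n+1)) c
      rw [Polynomial.derivative_pow, Polynomial.derivative_sub, Polynomial.derivative_X,
        Polynomial.derivative_C, sub_zero, mul_one] at h
      rw [show (n+1-1 : ℕ) = n from rfl] at h
      rw [specJ_C_mul, ih.1] at h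
      have hmul : (Polynomial.X - Polynomial.C c) * (Polynomial.X - Polynomial.C c)^(n+1)
          = (Polynomial.X - Polynomial.C c)^(n+2) := by ring
      rw [hmul] at h
      have h4 : (4*(π:ℂ)) ≠ 0 := by simp [Real.pi_ne_zero]
      have : specJ ((Polynomial.X - Polynomial.C c)^(n+2)) c
          = (((n:ℕ)+1 : ℕ):ℂ) * ((Mfun n : ℝ):ℂ) / (4*(π:ℂ)) := by
        field_simp at h ⊢
        push_cast at h ⊢
        linear_combination -h
      rw [this]
      show _ = ((Mfun (n+2) : ℝ) : ℂ)
      rw [show Mfun (n+2) = (n+1)/(4*π) * Mfun n from rfl]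
      push_cast
      have hpi : (π:ℂ) ≠ 0 := by exact_mod_cast Real.pi_ne_zero
      field_simp
  exact fun j => (key j).1

lemma specJ_eq_taylor_at_zero (Q : Polynomial ℂ) (c : ℂ) :
    specJ Q c = specJ (Polynomial.taylor c Q) 0 := by
  conv_lhs => rw [← Polynomial.sum_taylor_eq Q c]
  rw [Polynomial.sum]
  rw [specJ_sum]
  conv_rhs => rw [← Polynomial.sum_C_mul_X_pow_eq (Polynomial.taylor c Q)]
  rw [Polynomial.sum, specJ_sum]
  apply Finset.sum_congr rfl
  intro i _
  rw [specJ_C_mul, specJ_C_mul, specJ_mu]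
  have : (Polynomial.X : ℂ[X])^i = (Polynomial.X - Polynomial.C 0)^i := by simp
  rw [this, specJ_mu]

lemma specJ_taylor_expand (Q : Polynomial ℂ) (c : ℂ) (n : ℕ) (hn : Q.natDegree < n) :
    specJ (Polynomial.taylor c Q) 0
      = ∑ i ∈ Finset.range n, c^i * specJ (Polynomial.hasseDeriv i Q) 0 := by
  unfold specJ
  have hpt : ∀ t : ℝ, (Polynomial.taylor c Q).eval (t:ℂ) * specK 0 t
      = ∑ i ∈ Finset.range n,
          c^i * ((Polynomial.hasseDeriv i Q).eval (t:ℂ) * specK 0 t) := by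
    intro t
    have h1 : (Polynomial.taylor c Q).eval (t:ℂ) = (Polynomial.taylor (t:ℂ) Q).eval c := by
      rw [Polynomial.taylor_eval, Polynomial.taylor_eval, add_comm]
    have h2 : (Polynomial.taylor (t:ℂ) Q).natDegree < n := by
      rwa [Polynomial.natDegree_taylor]
    rw [h1, Polynomial.eval_eq_sum_range' h2, Finset.sum_mul]
    apply Finset.sum_congr rfl
    intro i _
    rw [Polynomial.taylor_coeff]
    ring
  simp_rw [hpt]
  rw [integral_finset_sum]
  · apply Finset.sum_congr rfl
    intro i _
    rw [integral_const_mul]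
  · intro i _
    exact (integrable_poly_specK (Polynomial.hasseDeriv i Q) 0).const_mul _


noncomputable def adjP (S : Polynomial ℂ) : Polynomial ℂ :=
  Polynomial.C (4*(π:ℂ)) * (Polynomial.X * S) - Polynomial.derivative S

lemma specJ_step (U S : Polynomial ℂ) :
    specJ (Polynomial.derivative U * S) 0 = specJ (U * adjP S) 0 := by
  have h := specJ_ibp (U * S) 0
  rw [Polynomial.derivative_mul] at h
  rw [specJ_add] at h
  have h1 : (Polynomial.X - Polynomial.C (0:ℂ)) * (U * S) = Polynomial.X * (U * S) := by
    simp
  rw [h1] at h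
  have h2 : U * adjP S
      = Polynomial.C (4*(π:ℂ)) * (Polynomial.X * (U * S)) - U * Polynomial.derivative S := by
    unfold adjP; ring
  rw [h2, specJ_sub, specJ_C_mul]
  linear_combination h
  
lemma specJ_iter (Q : Polynomial ℂ) :
    ∀ (i : ℕ) (S : Polynomial ℂ),
      specJ ((Polynomial.derivative)^[i] Q * S) 0 = specJ (Q * adjP^[i] S) 0 := by
  intro i
  induction i with
  | zero => intro S; rfl
  | succ n ih =>
    intro S
    rw [Function.iterate_succ_apply', specJ_step, ih, ← Function.iterate_succ_apply]

lemma adjP_coeff (i : ℕ) :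
    ∀ j : ℕ, i ≤ j → (adjP^[i] 1).coeff j = if j = i then (4*(π:ℂ))^i else 0 := by
  induction i with
  | zero => intro j _; simp [Polynomial.coeff_one]
  | succ n ih =>
    intro j hj
    obtain ⟨m, rfl⟩ : ∃ m, j = m + 1 := ⟨j - 1, by omega⟩
    rw [Function.iterate_succ_apply']
    set T := adjP^[n] 1 with hT
    rw [adjP]
    rw [Polynomial.coeff_sub, Polynomial.coeff_C_mul, Polynomial.coeff_X_mul,
      Polynomial.coeff_derivative]
    have hm : n ≤ m := by omega
    rw [ih m hm]
    have h2 : T.coeff (m + 1 + 1) = 0 := by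
      rw [ih (m+1+1) (by omega)]
      simp only [ite_eq_right_iff]
      intro he
      omega
    rw [h2, zero_mul, sub_zero]
    by_cases hmn : m = n
    · subst hmn
      simp [pow_succ]
      ring
    · have : ¬ (m + 1 = n + 1) := by omega
      simp [hmn, this]

section Main
variable (k : ℕ) (P : Polynomial ℝ)

lemma specJ_real (R : Polynomial ℝ) :
    specJ (R.map (algebraMap ℝ ℂ)) 0
      = ((∫ t : ℝ, R.eval t * Real.exp (-2*π*t^2) : ℝ) : ℂ) := by
  unfold specJ
  have h0 : ∫ t : ℝ, ((R.eval t * Real.exp (-2*π*t^2) : ℝ) : ℂ)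
      = ((∫ t : ℝ, R.eval t * Real.exp (-2*π*t^2) : ℝ) : ℂ) := integral_ofReal
  rw [← h0]
  congr 1
  funext t
  rw [Polynomial.eval_map, Complex.ofReal_mul, Complex.ofReal_exp]
  have h1 : Polynomial.eval₂ (algebraMap ℝ ℂ) (t:ℂ) R = ((R.eval t : ℝ) : ℂ) := by
    have := Polynomial.eval₂_at_apply (algebraMap ℝ ℂ) (p := R) t
    simpa using this
  rw [h1]
  congr 1
  unfold specK
  congr 1
  push_cast
  ring

variable (hdeg : P.natDegree = k) (hlead : 0 < P.leadingCoeff)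
  (horth : ∀ j : ℕ, j < k → ∫ t : ℝ, P.eval t * t ^ j * Real.exp (-2 * π * t ^ 2) = 0)

local notation "Q" => P.map (algebraMap ℝ ℂ)

include hdeg horth in
lemma specJ_orth (T : Polynomial ℂ) (hT : ∀ j, k ≤ j → T.coeff j = 0) :
    specJ (Q * T) 0 = 0 := by
  conv_lhs => rw [← Polynomial.sum_C_mul_X_pow_eq T]
  rw [Polynomial.sum, Finset.mul_sum, specJ_sum]
  apply Finset.sum_eq_zero
  intro j hj
  have hjk : j < k := by
    by_contra hge
    exact (Polynomial.mem_support_iff.mp hj) (hT j (by omega))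
  have h1 : Q * (Polynomial.C (T.coeff j) * Polynomial.X ^ j)
      = Polynomial.C (T.coeff j) * (Q * Polynomial.X ^ j) := by ring
  rw [h1, specJ_C_mul]
  have h2 : (Q : Polynomial ℂ) * Polynomial.X ^ j = (P * Polynomial.X ^ j).map (algebraMap ℝ ℂ) := by
    rw [Polynomial.map_mul, Polynomial.map_pow, Polynomial.map_X]
  rw [h2, specJ_real]
  have h3 : ∫ t : ℝ, (P * Polynomial.X ^ j).eval t * Real.exp (-2*π*t^2)
      = ∫ t : ℝ, P.eval t * t ^ j * Real.exp (-2 * π * t ^ 2) := by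
    congr 1; funext t
    rw [Polynomial.eval_mul, Polynomial.eval_pow, Polynomial.eval_X]
  rw [h3, horth j hjk]
  simp

include hdeg horth in
lemma specJ_hasse_lt (i : ℕ) (hik : i < k) : specJ (Polynomial.hasseDeriv i Q) 0 = 0 := by
  have hsmul : (Nat.factorial i) • Polynomial.hasseDeriv i Q = (Polynomial.derivative)^[i] Q := by
    have := Polynomial.factorial_smul_hasseDeriv (R := ℂ) (k := i)
    exact congrFun this Q
  have h1 : specJ ((Polynomial.derivative)^[i] Q) 0 = 0 := by
    rw [← mul_one ((Polynomial.derivative)^[i] Q), specJ_iter]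
    apply specJ_orth k P hdeg horth
    intro j hj
    rw [adjP_coeff i j (by omega)]
    simp only [ite_eq_right_iff]
    intro he; omega
  rw [← hsmul] at h1
  rw [nsmul_eq_mul] at h1
  have hC : ((Nat.factorial i : ℕ) : Polynomial ℂ) = Polynomial.C ((Nat.factorial i : ℕ) : ℂ) := by
    simp
  rw [hC, specJ_C_mul] at h1
  have hne : ((Nat.factorial i : ℕ) : ℂ) ≠ 0 := by
    exact_mod_cast Nat.factorial_ne_zero i
  exact (mul_eq_zero.mp h1).resolve_left hne

include hdeg in
lemma hQdeg : (Q : Polynomial ℂ).natDegree = k := by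
  rw [Polynomial.natDegree_map_eq_of_injective (algebraMap ℝ ℂ).injective P]
  exact hdeg

include hdeg in
lemma hasse_top : Polynomial.hasseDeriv k Q = Polynomial.C ((P.leadingCoeff : ℝ) : ℂ) := by
  have hQd := hQdeg k P hdeg
  have hcoeff : (Q : Polynomial ℂ).coeff k = ((P.leadingCoeff : ℝ) : ℂ) := by
    rw [Polynomial.coeff_map, Polynomial.leadingCoeff, hdeg]
    rfl
  ext m
  rw [Polynomial.hasseDeriv_coeff]
  cases m with
  | zero =>
    simp only [zero_add, Nat.choose_self, one_smul, Polynomial.coeff_C]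
    simpa using hcoeff
  | succ m =>
    have hz : (Q : Polynomial ℂ).coeff (m + 1 + k) = 0 :=
      Polynomial.coeff_eq_zero_of_natDegree_lt (by omega)
    rw [hz]
    simp [Polynomial.coeff_C]

include hdeg in
lemma hasse_top_specJ : specJ (Polynomial.hasseDeriv k Q) 0
    = ((P.leadingCoeff : ℝ) : ℂ) * ((Mfun 0 : ℝ) : ℂ) := by
  rw [hasse_top k P hdeg]
  rw [show (Polynomial.C ((P.leadingCoeff : ℝ) : ℂ)) = Polynomial.C ((P.leadingCoeff : ℝ) : ℂ) * 1
    from (mul_one _).symm]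
  rw [specJ_C_mul, specJ_one]

include hdeg horth in
lemma specJ_main (c : ℂ) :
    specJ Q c = (((P.leadingCoeff : ℝ) : ℂ) * ((Mfun 0 : ℝ) : ℂ)) * c^k := by
  rw [specJ_eq_taylor_at_zero, specJ_taylor_expand _ c (k+1) (by rw [hQdeg k P hdeg]; omega)]
  rw [Finset.sum_eq_single k]
  · rw [hasse_top_specJ k P hdeg]; ring
  · intro i hi hik
    have : i < k := by
      have := Finset.mem_range.mp hi; omega
    rw [specJ_hasse_lt k P hdeg horth i this, mul_zero]
  · intro hk
    exact absurd (Finset.self_mem_range_succ k) hk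

include hdeg horth in
lemma specJ_moment :
    ((Nat.factorial k : ℕ) : ℂ) * ((P.leadingCoeff : ℝ) : ℂ) * ((Mfun 0 : ℝ) : ℂ)
      = (4*(π:ℂ))^k * specJ (Q * Polynomial.X ^ k) 0 := by
  have hiter := specJ_iter Q k 1
  have hL : (Polynomial.derivative)^[k] Q
      = Polynomial.C (((Nat.factorial k : ℕ) : ℂ) * ((P.leadingCoeff : ℝ) : ℂ)) := by
    have hsmul : (Nat.factorial k) • Polynomial.hasseDeriv k Q = (Polynomial.derivative)^[k] Q := by
      have := Polynomial.factorial_smul_hasseDeriv (R := ℂ) (k := k)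
      exact congrFun this Q
    rw [← hsmul, hasse_top k P hdeg, Polynomial.smul_C]
    rw [nsmul_eq_mul]
  rw [mul_one, hL] at hiter
  rw [show (Polynomial.C (((Nat.factorial k : ℕ) : ℂ) * ((P.leadingCoeff : ℝ) : ℂ)))
      = Polynomial.C (((Nat.factorial k : ℕ) : ℂ) * ((P.leadingCoeff : ℝ) : ℂ)) * 1
    from (mul_one _).symm, specJ_C_mul, specJ_one] at hiter
  have hsplit : Q * adjP^[k] 1
      = Polynomial.C ((4*(π:ℂ))^k) * (Q * Polynomial.X ^ k)
        + Q * (adjP^[k] 1 - Polynomial.C ((4*(π:ℂ))^k) * Polynomial.X ^ k) := by ring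
  rw [hsplit, specJ_add, specJ_C_mul] at hiter
  have hrem : specJ (Q * (adjP^[k] 1 - Polynomial.C ((4*(π:ℂ))^k) * Polynomial.X ^ k)) 0 = 0 := by
    apply specJ_orth k P hdeg horth
    intro j hj
    rw [Polynomial.coeff_sub, adjP_coeff k j hj, Polynomial.coeff_C_mul, Polynomial.coeff_X_pow]
    by_cases hjk : j = k <;> simp [hjk]
  rw [hrem, add_zero] at hiter
  rw [← hiter]

include hdeg horth in
lemma specJ_norm_sq
    (hnormR : ∫ t : ℝ, (P.eval t)^2 * Real.exp (-2*π*t^2) = 1) :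
    ((P.leadingCoeff : ℝ) : ℂ) * specJ (Q * Polynomial.X ^ k) 0 = 1 := by
  have hQQ : specJ (Q * Q) 0 = 1 := by
    have : (Q : Polynomial ℂ) * Q = (P * P).map (algebraMap ℝ ℂ) := by
      rw [Polynomial.map_mul]
    rw [this, specJ_real]
    have h2 : ∫ t : ℝ, (P * P).eval t * Real.exp (-2*π*t^2)
        = ∫ t : ℝ, (P.eval t)^2 * Real.exp (-2*π*t^2) := by
      congr 1; funext t
      rw [Polynomial.eval_mul]; ring
    rw [h2, hnormR]
    norm_num
  have hsplit : (Q : Polynomial ℂ) * Q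
      = Polynomial.C (((P.leadingCoeff : ℝ) : ℂ)) * (Q * Polynomial.X ^ k)
        + Q * (Q - Polynomial.C (((P.leadingCoeff : ℝ) : ℂ)) * Polynomial.X ^ k) := by ring
  rw [hsplit, specJ_add, specJ_C_mul] at hQQ
  have hcoeff : (Q : Polynomial ℂ).coeff k = ((P.leadingCoeff : ℝ) : ℂ) := by
    rw [Polynomial.coeff_map, Polynomial.leadingCoeff, hdeg]
    rfl
  have hrem : specJ (Q * (Q - Polynomial.C (((P.leadingCoeff : ℝ) : ℂ)) * Polynomial.X ^ k)) 0
      = 0 := by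
    apply specJ_orth k P hdeg horth
    intro j hj
    rw [Polynomial.coeff_sub, Polynomial.coeff_C_mul, Polynomial.coeff_X_pow]
    rcases eq_or_lt_of_le hj with hjk | hjk
    · subst hjk
      simp [hcoeff]
    · have : (Q : Polynomial ℂ).coeff j = 0 :=
        Polynomial.coeff_eq_zero_of_natDegree_lt (by rw [hQdeg k P hdeg]; omega)
      simp [this, Nat.ne_of_gt hjk]
  rw [hrem, add_zero] at hQQ
  exact hQQ

end Main


end SpecHermiteAux

/-- The spectrogram of the `k`-th Hermite function `h_k` is
`e^{−π|z|²} π^k |z|^{2k} / k!`. Here `h_k = P·e^{-πt²}` is `L²`-normalized, where `P` is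
the degree-`k` orthogonal polynomial for the weight `e^{−2πt²}` with positive leading
coefficient. -/
theorem spec_hermite (k : ℕ) (P : Polynomial ℝ)
    (hdeg : P.natDegree = k) (hlead : 0 < P.leadingCoeff)
    (horth : ∀ j : ℕ, j < k → ∫ t : ℝ, P.eval t * t ^ j * Real.exp (-2 * π * t ^ 2) = 0)
    (h : ℝ → ℂ)
    (hh : ∀ t : ℝ, h t = ((P.eval t * Real.exp (-π * t ^ 2) : ℝ) : ℂ))
    (hnorm : ∫ t : ℝ, ‖h t‖ ^ 2 = 1)
    (z : ℂ) :
    Spec h z = Real.exp (-π * ‖z‖ ^ 2) * π ^ k * ‖z‖ ^ (2 * k)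
      / (Nat.factorial k) := by
  set a := P.leadingCoeff with ha
  set M0 := Mfun 0 with hM0
  have hM0val : M0 = (1/2 : ℝ) ^ ((1:ℝ)/2) := rfl
  have hM0pos : 0 < M0 := by rw [hM0val]; positivity
  -- normalization in real form
  have hnormR : ∫ t : ℝ, (P.eval t)^2 * Real.exp (-2*π*t^2) = 1 := by
    rw [← hnorm]
    congr 1
    funext t
    have he : Real.exp (-π*t^2)^2 = Real.exp (-2*π*t^2) := by
      rw [pow_two, ← Real.exp_add]
      congr 1
      ring
    rw [hh t, Complex.norm_real, Real.norm_eq_abs, sq_abs, mul_pow, he]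
  -- key algebraic identity
  have hmom := specJ_moment k P hdeg horth
  have hns := specJ_norm_sq k P hdeg horth hnormR
  have keyC : ((a:ℝ):ℂ)^2 * ((Nat.factorial k : ℕ) : ℂ) * ((M0:ℝ):ℂ) = (4*(π:ℂ))^k := by
    linear_combination ((a:ℝ):ℂ) * hmom + ((4*(π:ℂ))^k) * hns
  have keyR : a^2 * (Nat.factorial k : ℝ) * M0 = (4*π)^k := by
    have : (((a^2 * (Nat.factorial k : ℝ) * M0 : ℝ)) : ℂ) = ((((4*π)^k : ℝ)) : ℂ) := by
      push_cast
      push_cast at keyC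
      linear_combination keyC
    exact_mod_cast this
  -- the integral
  set c : ℂ := ((z.re : ℂ) - (z.im : ℂ) * Complex.I) / 2 with hc
  set wr : ℝ := -π*(z.re^2+z.im^2)/2 with hwr
  set wi : ℝ := -π*z.re*z.im with hwi
  have hW : (2*(π:ℂ)*c^2 - (π:ℂ)*(z.re:ℂ)^2) = ((wr:ℝ):ℂ) + ((wi:ℝ):ℂ)*Complex.I := by
    rw [hc, hwr, hwi]
    push_cast
    linear_combination ((π:ℂ)/2 * (z.im:ℂ)^2) * Complex.I_sq
  have hQe : ∀ t : ℝ, (P.map (algebraMap ℝ ℂ)).eval (t:ℂ) = ((P.eval t : ℝ) : ℂ) := by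
    intro t
    rw [Polynomial.eval_map]
    simpa using Polynomial.eval₂_at_apply (algebraMap ℝ ℂ) (p := P) t
  have hpt : ∀ t : ℝ,
      h t * (((2 : ℝ) ^ ((1 : ℝ) / 4) : ℝ) : ℂ)
        * Complex.exp (-(π : ℂ) * ((t : ℂ) - (z.re : ℂ)) ^ 2)
        * Complex.exp (-2 * (π : ℂ) * Complex.I * (z.im : ℂ) * (t : ℂ))
      = (Complex.exp (2*(π:ℂ)*c^2 - (π:ℂ)*(z.re:ℂ)^2) * (((2 : ℝ) ^ ((1 : ℝ) / 4) : ℝ) : ℂ))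
          * ((P.map (algebraMap ℝ ℂ)).eval (t:ℂ) * specK c t) := by
    intro t
    rw [hh t, Complex.ofReal_mul, Complex.ofReal_exp, hQe t]
    have hexp : Complex.exp (((-π * t^2 : ℝ) : ℂ))
          * (Complex.exp (-(π : ℂ) * ((t : ℂ) - (z.re : ℂ)) ^ 2)
            * Complex.exp (-2 * (π : ℂ) * Complex.I * (z.im : ℂ) * (t : ℂ)))
        = Complex.exp (2*(π:ℂ)*c^2 - (π:ℂ)*(z.re:ℂ)^2) * specK c t := by
      rw [specK, ← Complex.exp_add, ← Complex.exp_add, ← Complex.exp_add]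
      congr 1
      rw [hc]
      push_cast
      ring
    linear_combination (((P.eval t : ℝ) : ℂ) * (((2 : ℝ) ^ ((1 : ℝ) / 4) : ℝ) : ℂ)) * hexp
  have hint : (∫ t : ℝ, h t * (((2 : ℝ) ^ ((1 : ℝ) / 4) : ℝ) : ℂ)
        * Complex.exp (-(π : ℂ) * ((t : ℂ) - (z.re : ℂ)) ^ 2)
        * Complex.exp (-2 * (π : ℂ) * Complex.I * (z.im : ℂ) * (t : ℂ)))
      = (Complex.exp (2*(π:ℂ)*c^2 - (π:ℂ)*(z.re:ℂ)^2) * (((2 : ℝ) ^ ((1 : ℝ) / 4) : ℝ) : ℂ))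
        * (((a:ℝ):ℂ) * ((M0:ℝ):ℂ) * c^k) := by
    rw [show (∫ t : ℝ, h t * (((2 : ℝ) ^ ((1 : ℝ) / 4) : ℝ) : ℂ)
        * Complex.exp (-(π : ℂ) * ((t : ℂ) - (z.re : ℂ)) ^ 2)
        * Complex.exp (-2 * (π : ℂ) * Complex.I * (z.im : ℂ) * (t : ℂ)))
      = ∫ t : ℝ, (Complex.exp (2*(π:ℂ)*c^2 - (π:ℂ)*(z.re:ℂ)^2)
          * (((2 : ℝ) ^ ((1 : ℝ) / 4) : ℝ) : ℂ))
          * ((P.map (algebraMap ℝ ℂ)).eval (t:ℂ) * specK c t) from by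
        congr 1; funext t; exact hpt t]
    rw [integral_const_mul]
    rw [show (∫ t : ℝ, (P.map (algebraMap ℝ ℂ)).eval (t:ℂ) * specK c t)
      = specJ (P.map (algebraMap ℝ ℂ)) c from rfl]
    rw [specJ_main k P hdeg horth c]
  -- compute absolute values
  have hcabs : ‖c‖ = ‖z‖ / 2 := by
    rw [hc]
    rw [show ((z.re:ℂ) - (z.im:ℂ)*Complex.I) = (starRingEnd ℂ) z from by
      apply Complex.ext <;> simp]
    rw [norm_div, Complex.norm_conj]
    simp
  have habs : Spec h z = (Real.exp wr * ((2 : ℝ) ^ ((1 : ℝ) / 4)) * (a * M0 * (‖z‖ / 2)^k))^2 := by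
    rw [Spec, hint, hW]
    rw [norm_mul, norm_mul, norm_mul, norm_mul, norm_pow]
    rw [Complex.norm_exp]
    rw [Complex.norm_real, Complex.norm_real, Complex.norm_real, Real.norm_eq_abs, Real.norm_eq_abs,
      Real.norm_eq_abs, hcabs]
    rw [abs_of_pos hlead, abs_of_pos hM0pos, abs_of_pos (by positivity : (0:ℝ) < (2:ℝ)^((1:ℝ)/4))]
    have hre : (((wr:ℝ):ℂ) + ((wi:ℝ):ℂ)*Complex.I).re = wr := by simp
    rw [hre]
  rw [habs]
  -- final arithmetic
  have h2q : ((2 : ℝ) ^ ((1 : ℝ) / 4))^2 * M0 = (2:ℝ) ^ ((1:ℝ)/2) * (2:ℝ) ^ (-((1:ℝ)/2)) := by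
    rw [hM0val]
    rw [← Real.rpow_natCast ((2:ℝ) ^ ((1:ℝ)/4)) 2, ← Real.rpow_mul (by norm_num)]
    norm_num
    rw [show ((1:ℝ)/2) = (2:ℝ)⁻¹ by norm_num, Real.inv_rpow (by norm_num), ← Real.rpow_neg_one,
      ← Real.rpow_mul (by norm_num)]
    norm_num
  have h2q1 : ((2 : ℝ) ^ ((1 : ℝ) / 4))^2 * M0 = 1 := by
    rw [h2q, ← Real.rpow_add (by norm_num)]
    norm_num
  have habsz : ‖z‖ ^ 2 = z.re^2 + z.im^2 := by
    rw [Complex.sq_norm, Complex.normSq_apply]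
    ring
  have hexp2 : Real.exp wr ^ 2 = Real.exp (-π * ‖z‖ ^ 2) := by
    rw [pow_two, ← Real.exp_add, habsz, hwr]
    congr 1
    ring
  have hkne : ((Nat.factorial k : ℕ) : ℝ) ≠ 0 := Nat.cast_ne_zero.mpr (Nat.factorial_ne_zero k)
  rw [eq_div_iff hkne]
  have h4k : (4:ℝ)^k = 2^k * 2^k := by
    rw [show (4:ℝ) = 2*2 by norm_num, mul_pow]
  set E := Real.exp wr with hE
  set q := (2:ℝ) ^ ((1:ℝ)/4) with hq
  set r := ‖z‖ with hr
  set R := Real.exp (-π * r ^ 2) with hR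
  have h12 : ((1:ℝ)/2)^(k*2) * 2^(k*2) = 1 := by
    rw [← mul_pow]
    norm_num
  linear_combination (q^2*a^2*M0^2*(r/2)^(2*k)*((Nat.factorial k : ℕ):ℝ)) * hexp2
    + (R*a^2*M0*(r/2)^(2*k)*((Nat.factorial k : ℕ):ℝ)) * h2q1
    + (R*(r/2)^(2*k)) * keyR
    + (R*(π:ℝ)^k*(r/2)^(2*k)) * h4k
    + (R*(π:ℝ)^k*r^(k*2)) * h12
end

section
/- Fix k ∈ ℕ with k ≥ 1 and γ > 0, and define ρ: ℂ → ℝ by ρ(z) = (1 + γ r^{k−1}(k−r)² e^{−r}/k!) · exp(−γ r^k e^{−r}/k!) with r = π|z|². Then for every R > 0, ∫_{B(0,R)} ρ(z) dz = k − (k − πR²) · exp(−γ π^k R^{2k} e^{−πR²} / k!), where B(0,R) ⊂ ℂ ≅ ℝ² is the open disc of radius R centered at 0 and dz is the Lebesgue measure on ℝ². -/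
open Real MeasureTheory

lemma hermite_hasDerivAt (k : ℕ) (hk : 1 ≤ k) (γ : ℝ) (s : ℝ) :
    HasDerivAt (fun s : ℝ => (k : ℝ) - ((k : ℝ) - π * s ^ 2)
        * Real.exp (-(γ * (π * s ^ 2) ^ k * Real.exp (-(π * s ^ 2)) / (Nat.factorial k))))
      (2 * π * s * ((1 + γ * (π * s ^ 2) ^ (k - 1) * ((k : ℝ) - π * s ^ 2) ^ 2
          * Real.exp (-(π * s ^ 2)) / (Nat.factorial k))
        * Real.exp (-(γ * (π * s ^ 2) ^ k * Real.exp (-(π * s ^ 2)) / (Nat.factorial k))))) s := by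
  have h1 : HasDerivAt (fun s : ℝ => π * s ^ 2) (2 * π * s) s := by
    have := (hasDerivAt_pow 2 s).const_mul π
    refine this.congr_deriv ?_
    rw [show (2:ℕ) - 1 = 1 from rfl]; push_cast; ring
  have hA := h1.pow k
  have hB := h1.neg.exp
  have hv := ((hA.const_mul γ).mul hB).div_const (Nat.factorial k : ℝ)
  have hexp := hv.neg.exp
  have hu : HasDerivAt (fun s : ℝ => (k : ℝ) - π * s ^ 2) (0 - 2 * π * s) s :=
    (hasDerivAt_const s (k : ℝ)).sub h1
  have hF := (hasDerivAt_const s (k : ℝ)).sub (hu.mul hexp)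
  refine hF.congr_deriv ?_
  simp only [Pi.pow_apply, Pi.neg_apply, Pi.mul_apply]
  have hk' : (π * s ^ 2) ^ k = (π * s ^ 2) ^ (k - 1) * (π * s ^ 2) := by
    rw [← pow_succ, Nat.sub_add_cancel hk]
  rw [hk']
  ring

/-- The expected number of zeros of the spectrogram of a noisy Hermite function falling
in the disc `B(0,R)`: integrating the intensity
`ρ(z) = (1 + γ r^{k−1}(k−r)² e^{−r}/k!) exp(−γ r^k e^{−r}/k!)`, `r = π|z|²`, over `B(0,R)`
gives `k − (k − πR²) exp(−γ π^k R^{2k} e^{−πR²}/k!)`. -/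
theorem expected_zeros_ball_hermite (k : ℕ) (hk : 1 ≤ k) (γ : ℝ) (hγ : 0 < γ)
    (ρ : ℂ → ℝ)
    (hρ : ∀ z : ℂ, ρ z =
      (1 + γ * (π * ‖z‖ ^ 2) ^ (k - 1)
          * ((k : ℝ) - π * ‖z‖ ^ 2) ^ 2
          * Real.exp (-(π * ‖z‖ ^ 2)) / (Nat.factorial k))
        * Real.exp (-(γ * (π * ‖z‖ ^ 2) ^ k
          * Real.exp (-(π * ‖z‖ ^ 2)) / (Nat.factorial k))))
    (R : ℝ) (hR : 0 < R) :
    ∫ z in Metric.ball (0 : ℂ) R, ρ z =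
      (k : ℝ) - ((k : ℝ) - π * R ^ 2)
        * Real.exp (-(γ * π ^ k * R ^ (2 * k) * Real.exp (-π * R ^ 2)
          / (Nat.factorial k))) := by
  set g : ℝ → ℝ := fun t =>
    (1 + γ * (π * t ^ 2) ^ (k - 1) * ((k : ℝ) - π * t ^ 2) ^ 2
        * Real.exp (-(π * t ^ 2)) / (Nat.factorial k))
      * Real.exp (-(γ * (π * t ^ 2) ^ k * Real.exp (-(π * t ^ 2)) / (Nat.factorial k))) with hg
  set F : ℝ → ℝ := fun s => (k : ℝ) - ((k : ℝ) - π * s ^ 2)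
      * Real.exp (-(γ * (π * s ^ 2) ^ k * Real.exp (-(π * s ^ 2)) / (Nat.factorial k))) with hF
  have hgc : Continuous g := by fun_prop
  have hρg : ∀ z : ℂ, ρ z = g ‖z‖ := by
    intro z
    rw [hρ, hg]
  -- step 1: to indicator on ℂ
  have step1 : ∫ z in Metric.ball (0 : ℂ) R, ρ z
      = ∫ z : ℂ, (Set.Iio R).indicator g ‖z‖ := by
    rw [← integral_indicator measurableSet_ball]
    congr 1
    ext z
    by_cases h : ‖z‖ < R
    · rw [Set.indicator_of_mem (by simpa [Metric.mem_ball] using h),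
        Set.indicator_of_mem (by simpa using h), hρg]
    · rw [Set.indicator_of_notMem (by simpa [Metric.mem_ball] using h),
        Set.indicator_of_notMem (by simpa using h)]
  -- step 2: polar
  have step2 : ∫ z : ℂ, (Set.Iio R).indicator g ‖z‖
      = (2 : ℕ) • (volume (Metric.ball (0 : ℂ) 1)).toReal
          • ∫ y in Set.Ioi (0 : ℝ), y ^ (2 - 1) • (Set.Iio R).indicator g y := by
    have := integral_fun_norm_addHaar (volume : Measure ℂ) ((Set.Iio R).indicator g)
    rwa [Complex.finrank_real_complex] at this
  have hvol : (volume (Metric.ball (0 : ℂ) 1)).toReal = π := by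
    rw [Complex.volume_ball]
    simp [ENNReal.toReal_mul]
  -- step 3: reduce to interval integral
  have step3 : ∫ y in Set.Ioi (0 : ℝ), y ^ (2 - 1) • (Set.Iio R).indicator g y
      = ∫ y in (0 : ℝ)..R, y * g y := by
    have : ∀ y : ℝ, y ^ (2 - 1) • (Set.Iio R).indicator g y
        = (Set.Iio R).indicator (fun y => y * g y) y := by
      intro y
      by_cases h : y ∈ Set.Iio R
      · rw [Set.indicator_of_mem h, Set.indicator_of_mem h]; simp
      · rw [Set.indicator_of_notMem h, Set.indicator_of_notMem h]; simp
    simp_rw [this]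
    rw [setIntegral_indicator measurableSet_Iio, Set.Ioi_inter_Iio,
      intervalIntegral.integral_of_le hR.le, ← integral_Ioc_eq_integral_Ioo]
  -- step 4: FTC
  have step4 : ∫ y in (0 : ℝ)..R, 2 * π * y * g y = F R - F 0 := by
    apply intervalIntegral.integral_eq_sub_of_hasDerivAt
    · intro x _
      exact hermite_hasDerivAt k hk γ x
    · exact (by fun_prop : Continuous fun y : ℝ => 2 * π * y * g y).intervalIntegrable 0 R
  have hF0 : F 0 = 0 := by
    simp [hF, zero_pow (by omega : k ≠ 0)]
  have step4' : (2 : ℕ) • (π • ∫ y in (0 : ℝ)..R, y * g y) = F R := by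
    have : ∫ y in (0 : ℝ)..R, 2 * π * y * g y
        = (2 * π) * ∫ y in (0 : ℝ)..R, y * g y := by
      rw [← intervalIntegral.integral_const_mul]
      congr 1; ext y; ring
    rw [this, hF0, sub_zero] at step4
    rw [nsmul_eq_mul, smul_eq_mul, ← step4]
    ring
  rw [step1, step2, hvol, step3, step4']
  show (k : ℝ) - ((k : ℝ) - π * R ^ 2)
      * Real.exp (-(γ * (π * R ^ 2) ^ k * Real.exp (-(π * R ^ 2)) / (Nat.factorial k))) = _
  rw [show (π * R ^ 2) ^ k = π ^ k * R ^ (2 * k) from by rw [mul_pow, pow_mul],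
    neg_mul, ← mul_assoc]
end

section
/- Fix k ∈ ℕ with k ≥ 1, and define for γ > 0 the function ρ_γ: ℂ → ℝ by ρ_γ(z) = (1 + γ r^{k−1}(k−r)² e^{−r}/k!) · exp(−γ r^k e^{−r}/k!) with r = π|z|². Then for every γ > 0, ∫_{B(0,√(k/π))} ρ_γ(z) dz = k; in particular this integral does not depend on γ. -/
open Real MeasureTheory

/-- For every signal-to-noise ratio `γ > 0`, the expected number of zeros of the
spectrogram of the noisy `k`-th Hermite function falling in the disc `B(0, √(k/π))`
equals `k`; in particular it does not depend on `γ`. Here the intensity is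
`ρ_γ(z) = (1 + γ r^{k−1}(k−r)² e^{−r}/k!) exp(−γ r^k e^{−r}/k!)` with `r = π|z|²`. -/
theorem expected_zeros_ball_hermite_indep (k : ℕ) (hk : 1 ≤ k)
    (ρ : ℝ → ℂ → ℝ)
    (hρ : ∀ γ : ℝ, ∀ z : ℂ, ρ γ z =
      (1 + γ * (π * ‖z‖ ^ 2) ^ (k - 1)
          * ((k : ℝ) - π * ‖z‖ ^ 2) ^ 2
          * Real.exp (-(π * ‖z‖ ^ 2)) / (Nat.factorial k))
        * Real.exp (-(γ * (π * ‖z‖ ^ 2) ^ k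
          * Real.exp (-(π * ‖z‖ ^ 2)) / (Nat.factorial k)))) :
    ∀ γ : ℝ, 0 < γ →
      ∫ z in Metric.ball (0 : ℂ) (Real.sqrt (k / π)), ρ γ z = (k : ℝ) := by
  obtain ⟨n, rfl⟩ := Nat.exists_eq_succ_of_ne_zero (Nat.one_le_iff_ne_zero.mp hk)
  intro γ hγ
  set c : ℝ := (Nat.factorial (n + 1) : ℝ) with hc
  have hc0 : (0 : ℝ) < c := by positivity
  have hKcast : ((n + 1 : ℕ) : ℝ) = (n : ℝ) + 1 := by push_cast; ring
  -- the radial profile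
  set g : ℝ → ℝ := fun r =>
    (1 + γ * r ^ n * ((n : ℝ) + 1 - r) ^ 2 * Real.exp (-r) / c) *
      Real.exp (-(γ * r ^ (n + 1) * Real.exp (-r) / c)) with hg
  have hgcont : Continuous g := by fun_prop
  -- the radius
  set R : ℝ := Real.sqrt ((n + 1 : ℕ) / π) with hR
  have hπ : (0 : ℝ) < π := Real.pi_pos
  have hR2 : π * R ^ 2 = (n : ℝ) + 1 := by
    rw [hR, Real.sq_sqrt (by positivity), hKcast]
    field_simp
  have hRpos : 0 < R := Real.sqrt_pos.mpr (by positivity)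
  -- Step 1: the integrand is `g (π * ‖z‖ ^ 2)`
  have step1 : ∫ z in Metric.ball (0 : ℂ) R, ρ γ z
      = ∫ z in Metric.ball (0 : ℂ) R, g (π * ‖z‖ ^ 2) := by
    refine integral_congr_ae (Filter.Eventually.of_forall fun z => ?_)
    rw [hρ, hg]
    simp only [Nat.succ_eq_add_one, Nat.add_sub_cancel]
    push_cast
    ring
  rw [step1]
  -- Step 2: pass to the radial integral
  set f : ℝ → ℝ := fun s => if s < R then g (π * s ^ 2) else 0 with hf
  have step2 : ∫ z in Metric.ball (0 : ℂ) R, g (π * ‖z‖ ^ 2) = ∫ z : ℂ, f ‖z‖ := by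
    rw [← integral_indicator measurableSet_ball]
    refine integral_congr_ae (Filter.Eventually.of_forall fun z => ?_)
    by_cases h : ‖z‖ < R
    · rw [Set.indicator_of_mem (by simpa [Metric.mem_ball] using h)]
      simp only [hf]
      rw [if_pos h]
    · rw [Set.indicator_of_notMem (by simpa [Metric.mem_ball] using h)]
      simp only [hf]
      rw [if_neg h]
  have hvol : volume.real (Metric.ball (0 : ℂ) 1) = π := by
    simp [Measure.real, Complex.volume_ball]
  rw [step2, integral_fun_norm_addHaar volume f, Complex.finrank_real_complex, hvol]
  simp only [smul_eq_mul, nsmul_eq_mul, Nat.cast_ofNat]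
  norm_num
  -- Step 3: reduce to an interval integral
  have step3 : ∫ y in Set.Ioi (0 : ℝ), y * f y = ∫ y in (0 : ℝ)..R, y * g (π * y ^ 2) := by
    have : (fun y : ℝ => y * f y) = Set.indicator (Set.Iio R) (fun y => y * g (π * y ^ 2)) := by
      funext y
      by_cases h : y < R <;> simp [hf, h, Set.indicator]
    rw [this, setIntegral_indicator measurableSet_Iio,
      show Set.Ioi (0 : ℝ) ∩ Set.Iio R = Set.Ioo 0 R by ext; simp [and_comm],
      intervalIntegral.integral_of_le hRpos.le, integral_Ioc_eq_integral_Ioo]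
  rw [step3]
  -- Step 4: substitution r = π y ^ 2
  have step4 : (2 : ℝ) * π * ∫ y in (0 : ℝ)..R, y * g (π * y ^ 2)
      = ∫ r in (0 : ℝ)..((n : ℝ) + 1), g r := by
    rw [← intervalIntegral.integral_const_mul]
    have : ∀ y ∈ Set.uIcc (0 : ℝ) R, HasDerivAt (fun y : ℝ => π * y ^ 2) (2 * π * y) y := by
      intro y _
      have := (hasDerivAt_pow 2 y).const_mul π
      exact this.congr_deriv (by ring)
    have hsub := intervalIntegral.integral_comp_smul_deriv this (by fun_prop) hgcont
    simp only [smul_eq_mul, Function.comp] at hsub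
    simp_rw [← mul_assoc]
    rw [hsub, hR2]
    norm_num
  rw [show ∀ a b x : ℝ, a * (b * x) = a * b * x from fun a b x => by ring, step4]
  -- Step 5: fundamental theorem of calculus
  set G : ℝ → ℝ := fun r => (r - ((n : ℝ) + 1)) * Real.exp (-(γ * r ^ (n + 1) * Real.exp (-r) / c)) with hG
  have hderiv : ∀ r : ℝ, HasDerivAt G (g r) r := by
    intro r
    have h1 : HasDerivAt (fun r : ℝ => γ * r ^ (n + 1) * Real.exp (-r) / c)
        (γ * (((n : ℝ) + 1) * r ^ n * Real.exp (-r) - r ^ (n + 1) * Real.exp (-r)) / c) r := by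
      have hp : HasDerivAt (fun r : ℝ => r ^ (n + 1)) (((n : ℝ) + 1) * r ^ n) r := by
        simpa [hKcast] using hasDerivAt_pow (n + 1) r
      have he : HasDerivAt (fun r : ℝ => Real.exp (-r)) (-Real.exp (-r)) r := by
        exact ((Real.hasDerivAt_exp (-r)).comp r (hasDerivAt_neg r)).congr_deriv (by ring)
      have := ((hp.const_mul γ).mul he).div_const c
      exact this.congr_deriv (by ring)
    have h2 := (h1.neg).exp
    have h3 := ((hasDerivAt_id r).sub_const ((n : ℝ) + 1)).mul h2
    refine h3.congr_deriv (Eq.symm ?_)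
    rw [hg]
    simp only [id_eq, one_mul, Pi.neg_apply]
    rw [pow_succ]
    field_simp
    ring
  have hint : IntervalIntegrable g volume 0 ((n : ℝ) + 1) := hgcont.intervalIntegrable 0 _
  rw [intervalIntegral.integral_eq_sub_of_hasDerivAt (fun r _ => hderiv r) hint]
  rw [hG]
  simp [hKcast]
end

section
/- Let a₁, a₂, b ∈ ℝ, γ₁, γ₂ > 0, σ_b = √(2/(1+4b²)). Define S: ℂ → ℝ by S(z) = σ_b (γ₁ e^{−2πr²} + γ₂ e^{−2π(r−a)²} + 2√(γ₁γ₂) e^{−πr²−π(r−a)²} cos(2πas)), where a = (σ_b/√2)(a₂−a₁), r = (σ_b/√2)(ω − 2bτ − a₁), s = (σ_b/√2)(τ + 2bω − (a₁+a₂)b) for z = τ+iω. Then for every z ∈ ℂ, (1 + S(z) + ΔS(z)/(4π)) · e^{−S(z)} = e^{−S(z)} · (1 + 4πσ_b(γ₁ r² e^{−2πr²} + γ₂ (r−a)² e^{−2π(r−a)²} + 2√(γ₁γ₂) r(r−a) e^{−πr²−π(r−a)²} cos(2πas))). -/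
open Real

/-- Partial derivative in the time (real-part) direction of a function on the
time-frequency plane `ℂ ≅ ℝ²`. -/
noncomputable def pderivRe (f : ℂ → ℝ) (z : ℂ) : ℝ :=
  deriv (fun t : ℝ => f (z + (t : ℂ))) 0

/-- Partial derivative in the frequency (imaginary-part) direction. -/
noncomputable def pderivIm (f : ℂ → ℝ) (z : ℂ) : ℝ :=
  deriv (fun t : ℝ => f (z + (t : ℂ) * Complex.I)) 0

/-- The Laplacian `Δ = ∂²/∂τ² + ∂²/∂ω²` of a function of `z = τ + iω`. -/
noncomputable def laplacian (f : ℂ → ℝ) (z : ℂ) : ℝ :=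
  pderivRe (pderivRe f) z + pderivIm (pderivIm f) z

lemma gauss_hda (β₀ β₁ u x : ℝ) :
    HasDerivAt (fun t : ℝ => (β₀ + β₁ * (x + u * t)) * Real.exp (-2 * π * (x + u * t) ^ 2))
      ((β₁ * u - (β₀ + β₁ * x) * (4 * π * x * u)) * Real.exp (-2 * π * x ^ 2)) 0 := by
  have hx : HasDerivAt (fun t : ℝ => x + u * t) u 0 := by
    simpa using ((hasDerivAt_id (0:ℝ)).const_mul u).const_add x
  have hq : HasDerivAt (fun t : ℝ => -2 * π * (x + u * t) ^ 2) (-2 * π * (2 * x * u)) 0 := by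
    have h := (hx.pow 2).const_mul (-2 * π)
    simp only [mul_zero, add_zero, pow_one] at h
    refine h.congr_deriv ?_
    ring
  have hE := hq.exp
  have hP : HasDerivAt (fun t : ℝ => β₀ + β₁ * (x + u * t)) (β₁ * u) 0 :=
    (hx.const_mul β₁).const_add β₀
  have h := hP.mul hE
  simp only [mul_zero, add_zero] at h
  refine h.congr_deriv ?_
  ring

lemma gaussa_hda (β₀ β₁ u x a : ℝ) :
    HasDerivAt (fun t : ℝ => (β₀ + β₁ * (x + u * t - a)) * Real.exp (-2 * π * (x + u * t - a) ^ 2))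
      ((β₁ * u - (β₀ + β₁ * (x - a)) * (4 * π * (x - a) * u)) * Real.exp (-2 * π * (x - a) ^ 2)) 0 := by
  have hx : HasDerivAt (fun t : ℝ => x + u * t - a) u 0 := by
    simpa using (((hasDerivAt_id (0:ℝ)).const_mul u).const_add x).sub_const a
  have hq : HasDerivAt (fun t : ℝ => -2 * π * (x + u * t - a) ^ 2) (-2 * π * (2 * (x - a) * u)) 0 := by
    have h := (hx.pow 2).const_mul (-2 * π)
    simp only [mul_zero, add_zero, pow_one] at h
    refine h.congr_deriv ?_
    ring
  have hE := hq.exp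
  have hP : HasDerivAt (fun t : ℝ => β₀ + β₁ * (x + u * t - a)) (β₁ * u) 0 :=
    (hx.const_mul β₁).const_add β₀
  have h := hP.mul hE
  simp only [mul_zero, add_zero] at h
  refine h.congr_deriv ?_
  ring

lemma cross_cos_hda (β₀ β₁ u v x s0 a : ℝ) :
    HasDerivAt (fun t : ℝ => (β₀ + β₁ * (x + u * t))
        * Real.exp (-π * (x + u * t) ^ 2 - π * (x + u * t - a) ^ 2)
        * Real.cos (2 * π * a * (s0 + v * t)))
      (((β₁ * u - (β₀ + β₁ * x) * (2 * π * u * (2 * x - a))) * Real.cos (2 * π * a * s0)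
          - (β₀ + β₁ * x) * (2 * π * a * v) * Real.sin (2 * π * a * s0))
        * Real.exp (-π * x ^ 2 - π * (x - a) ^ 2)) 0 := by
  have hx : HasDerivAt (fun t : ℝ => x + u * t) u 0 := by
    simpa using ((hasDerivAt_id (0:ℝ)).const_mul u).const_add x
  have hxa : HasDerivAt (fun t : ℝ => x + u * t - a) u 0 := hx.sub_const a
  have hq : HasDerivAt (fun t : ℝ => -π * (x + u * t) ^ 2 - π * (x + u * t - a) ^ 2)
      (-2 * π * u * (2 * x - a)) 0 := by
    have h := ((hx.pow 2).const_mul (-π)).sub ((hxa.pow 2).const_mul π)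
    simp only [mul_zero, add_zero, pow_one] at h
    refine h.congr_deriv ?_
    ring
  have hE := hq.exp
  have hP : HasDerivAt (fun t : ℝ => β₀ + β₁ * (x + u * t)) (β₁ * u) 0 :=
    (hx.const_mul β₁).const_add β₀
  have hw : HasDerivAt (fun t : ℝ => 2 * π * a * (s0 + v * t)) (2 * π * a * v) 0 := by
    have h := (((hasDerivAt_id (0:ℝ)).const_mul v).const_add s0).const_mul (2 * π * a)
    simpa using h
  have hC := hw.cos
  have h := (hP.mul hE).mul hC
  simp only [mul_zero, add_zero, Pi.mul_apply] at h
  refine h.congr_deriv ?_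
  ring

lemma cross_sin_hda (β₀ β₁ u v x s0 a : ℝ) :
    HasDerivAt (fun t : ℝ => (β₀ + β₁ * (x + u * t))
        * Real.exp (-π * (x + u * t) ^ 2 - π * (x + u * t - a) ^ 2)
        * Real.sin (2 * π * a * (s0 + v * t)))
      (((β₁ * u - (β₀ + β₁ * x) * (2 * π * u * (2 * x - a))) * Real.sin (2 * π * a * s0)
          + (β₀ + β₁ * x) * (2 * π * a * v) * Real.cos (2 * π * a * s0))
        * Real.exp (-π * x ^ 2 - π * (x - a) ^ 2)) 0 := by
  have hx : HasDerivAt (fun t : ℝ => x + u * t) u 0 := by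
    simpa using ((hasDerivAt_id (0:ℝ)).const_mul u).const_add x
  have hxa : HasDerivAt (fun t : ℝ => x + u * t - a) u 0 := hx.sub_const a
  have hq : HasDerivAt (fun t : ℝ => -π * (x + u * t) ^ 2 - π * (x + u * t - a) ^ 2)
      (-2 * π * u * (2 * x - a)) 0 := by
    have h := ((hx.pow 2).const_mul (-π)).sub ((hxa.pow 2).const_mul π)
    simp only [mul_zero, add_zero, pow_one] at h
    refine h.congr_deriv ?_
    ring
  have hE := hq.exp
  have hP : HasDerivAt (fun t : ℝ => β₀ + β₁ * (x + u * t)) (β₁ * u) 0 :=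
    (hx.const_mul β₁).const_add β₀
  have hw : HasDerivAt (fun t : ℝ => 2 * π * a * (s0 + v * t)) (2 * π * a * v) 0 := by
    have h := (((hasDerivAt_id (0:ℝ)).const_mul v).const_add s0).const_mul (2 * π * a)
    simpa using h
  have hC := hw.sin
  have h := (hP.mul hE).mul hC
  simp only [mul_zero, add_zero, Pi.mul_apply] at h
  refine h.congr_deriv ?_
  ring

lemma key_second (a σ γ₁ γ₂ : ℝ) (r s S : ℂ → ℝ)
    (hS : ∀ z : ℂ, S z = σ * (γ₁ * Real.exp (-2 * π * (r z) ^ 2)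
      + γ₂ * Real.exp (-2 * π * (r z - a) ^ 2)
      + 2 * Real.sqrt (γ₁ * γ₂) * Real.exp (-π * (r z) ^ 2 - π * (r z - a) ^ 2)
        * Real.cos (2 * π * a * s z)))
    (u v : ℝ) (φ : ℝ → ℂ → ℂ)
    (hφr : ∀ (w : ℂ) (t : ℝ), r (φ t w) = r w + u * t)
    (hφs : ∀ (w : ℂ) (t : ℝ), s (φ t w) = s w + v * t)
    (w : ℂ) :
    deriv (fun t : ℝ => deriv (fun t' : ℝ => S (φ t' (φ t w))) 0) 0 =
      σ * γ₁ * (16 * π ^ 2 * (r w) ^ 2 - 4 * π) * u ^ 2 * Real.exp (-2 * π * (r w) ^ 2)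
      + σ * γ₂ * (16 * π ^ 2 * (r w - a) ^ 2 - 4 * π) * u ^ 2 * Real.exp (-2 * π * (r w - a) ^ 2)
      + 2 * σ * Real.sqrt (γ₁ * γ₂) *
        (((-4 * π * u ^ 2 + 4 * π ^ 2 * u ^ 2 * (2 * r w - a) ^ 2 - 4 * π ^ 2 * a ^ 2 * v ^ 2)
            * Real.cos (2 * π * a * s w)
          + 8 * π ^ 2 * u * v * a * (2 * r w - a) * Real.sin (2 * π * a * s w))
          * Real.exp (-π * (r w) ^ 2 - π * (r w - a) ^ 2)) := by
  have d1 : ∀ w' : ℂ, deriv (fun t' : ℝ => S (φ t' w')) 0 =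
      -4 * π * u * σ * γ₁ * r w' * Real.exp (-2 * π * (r w') ^ 2)
      + -4 * π * u * σ * γ₂ * (r w' - a) * Real.exp (-2 * π * (r w' - a) ^ 2)
      + 2 * σ * Real.sqrt (γ₁ * γ₂) *
        ((-2 * π * u * (2 * r w' - a) * Real.cos (2 * π * a * s w')
          - 2 * π * a * v * Real.sin (2 * π * a * s w'))
          * Real.exp (-π * (r w') ^ 2 - π * (r w' - a) ^ 2)) := by
    intro w'
    have h1 := gauss_hda (σ * γ₁) 0 u (r w')
    have h2 := gaussa_hda (σ * γ₂) 0 u (r w') a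
    have h3 := cross_cos_hda (2 * σ * Real.sqrt (γ₁ * γ₂)) 0 u v (r w') (s w') a
    have hsum := (h1.add h2).add h3
    rw [show (fun t' : ℝ => S (φ t' w')) = (fun t' : ℝ =>
        (σ * γ₁ + 0 * (r w' + u * t')) * Real.exp (-2 * π * (r w' + u * t') ^ 2)
        + (σ * γ₂ + 0 * (r w' + u * t' - a)) * Real.exp (-2 * π * (r w' + u * t' - a) ^ 2)
        + (2 * σ * Real.sqrt (γ₁ * γ₂) + 0 * (r w' + u * t'))
            * Real.exp (-π * (r w' + u * t') ^ 2 - π * (r w' + u * t' - a) ^ 2)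
            * Real.cos (2 * π * a * (s w' + v * t'))) from
      funext fun t' => by rw [hS, hφr, hφs]; ring]
    refine hsum.deriv.trans ?_
    ring
  have h1 := gauss_hda 0 (-4 * π * u * σ * γ₁) u (r w)
  have h2 := gaussa_hda 0 (-4 * π * u * σ * γ₂) u (r w) a
  have h3 := cross_cos_hda (2 * π * u * a * (2 * σ * Real.sqrt (γ₁ * γ₂)))
    (-4 * π * u * (2 * σ * Real.sqrt (γ₁ * γ₂))) u v (r w) (s w) a
  have h4 := cross_sin_hda (-(2 * π * a * v) * (2 * σ * Real.sqrt (γ₁ * γ₂))) 0 u v (r w) (s w) a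
  have hsum := (h1.add h2).add (h3.add h4)
  rw [show (fun t : ℝ => deriv (fun t' : ℝ => S (φ t' (φ t w))) 0) = (fun t : ℝ =>
      (0 + -4 * π * u * σ * γ₁ * (r w + u * t)) * Real.exp (-2 * π * (r w + u * t) ^ 2)
      + (0 + -4 * π * u * σ * γ₂ * (r w + u * t - a)) * Real.exp (-2 * π * (r w + u * t - a) ^ 2)
      + ((2 * π * u * a * (2 * σ * Real.sqrt (γ₁ * γ₂))
            + -4 * π * u * (2 * σ * Real.sqrt (γ₁ * γ₂)) * (r w + u * t))
          * Real.exp (-π * (r w + u * t) ^ 2 - π * (r w + u * t - a) ^ 2)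
          * Real.cos (2 * π * a * (s w + v * t))
        + (-(2 * π * a * v) * (2 * σ * Real.sqrt (γ₁ * γ₂)) + 0 * (r w + u * t))
          * Real.exp (-π * (r w + u * t) ^ 2 - π * (r w + u * t - a) ^ 2)
          * Real.sin (2 * π * a * (s w + v * t)))) from
    funext fun t => by rw [d1 (φ t w), hφr, hφs]; ring]
  refine hsum.deriv.trans ?_
  ring

/-- Intensity of the zeros of the spectrogram of a noisy pair of parallel chirps:
for `S` the spectrogram of the pair of chirps, expressed in rotated coordinates `(r,s)`,
`(1 + S + ΔS/4π)e^{−S} = e^{−S}(1 + 4πσ_b(γ₁r²e^{−2πr²} + γ₂(r−a)²e^{−2π(r−a)²}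
+ 2√(γ₁γ₂) r(r−a) e^{−πr²−π(r−a)²} cos(2πas)))`. -/
theorem intensity_pair_of_chirps (a₁ a₂ b γ₁ γ₂ : ℝ) (hγ₁ : 0 < γ₁) (hγ₂ : 0 < γ₂)
    (σ a : ℝ) (hσ : σ = Real.sqrt (2 / (1 + 4 * b ^ 2)))
    (ha : a = σ / Real.sqrt 2 * (a₂ - a₁))
    (r s : ℂ → ℝ)
    (hr : ∀ z : ℂ, r z = σ / Real.sqrt 2 * (z.im - 2 * b * z.re - a₁))
    (hs : ∀ z : ℂ, s z = σ / Real.sqrt 2 * (z.re + 2 * b * z.im - (a₁ + a₂) * b))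
    (S : ℂ → ℝ)
    (hS : ∀ z : ℂ, S z = σ * (γ₁ * Real.exp (-2 * π * (r z) ^ 2)
      + γ₂ * Real.exp (-2 * π * (r z - a) ^ 2)
      + 2 * Real.sqrt (γ₁ * γ₂) * Real.exp (-π * (r z) ^ 2 - π * (r z - a) ^ 2)
        * Real.cos (2 * π * a * s z)))
    (z : ℂ) :
    (1 + S z + laplacian S z / (4 * π)) * Real.exp (-S z) =
      Real.exp (-S z) * (1 + 4 * π * σ * (γ₁ * (r z) ^ 2 * Real.exp (-2 * π * (r z) ^ 2)
        + γ₂ * (r z - a) ^ 2 * Real.exp (-2 * π * (r z - a) ^ 2)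
        + 2 * Real.sqrt (γ₁ * γ₂) * (r z) * (r z - a)
          * Real.exp (-π * (r z) ^ 2 - π * (r z - a) ^ 2) * Real.cos (2 * π * a * s z))) := by
  have hre_r : ∀ (w : ℂ) (t : ℝ), r (w + (t : ℂ)) = r w + -(2 * b * (σ / Real.sqrt 2)) * t := by
    intro w t; rw [hr, hr]; simp; ring
  have hre_s : ∀ (w : ℂ) (t : ℝ), s (w + (t : ℂ)) = s w + (σ / Real.sqrt 2) * t := by
    intro w t; rw [hs, hs]; simp; ring
  have him_r : ∀ (w : ℂ) (t : ℝ), r (w + (t : ℂ) * Complex.I) = r w + (σ / Real.sqrt 2) * t := by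
    intro w t; rw [hr, hr]; simp; ring
  have him_s : ∀ (w : ℂ) (t : ℝ), s (w + (t : ℂ) * Complex.I) = s w + (2 * b * (σ / Real.sqrt 2)) * t := by
    intro w t; rw [hs, hs]; simp; ring
  have L1 := key_second a σ γ₁ γ₂ r s S hS (-(2 * b * (σ / Real.sqrt 2))) (σ / Real.sqrt 2)
    (fun t w => w + (t : ℂ)) hre_r hre_s z
  have L2 := key_second a σ γ₁ γ₂ r s S hS (σ / Real.sqrt 2) (2 * b * (σ / Real.sqrt 2))
    (fun t w => w + (t : ℂ) * Complex.I) him_r him_s z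
  beta_reduce at L1 L2
  have hlap : laplacian S z =
      (σ * γ₁ * (16 * π ^ 2 * (r z) ^ 2 - 4 * π) * (-(2 * b * (σ / Real.sqrt 2))) ^ 2 * Real.exp (-2 * π * (r z) ^ 2)
      + σ * γ₂ * (16 * π ^ 2 * (r z - a) ^ 2 - 4 * π) * (-(2 * b * (σ / Real.sqrt 2))) ^ 2 * Real.exp (-2 * π * (r z - a) ^ 2)
      + 2 * σ * Real.sqrt (γ₁ * γ₂) *
        (((-4 * π * (-(2 * b * (σ / Real.sqrt 2))) ^ 2 + 4 * π ^ 2 * (-(2 * b * (σ / Real.sqrt 2))) ^ 2 * (2 * r z - a) ^ 2 - 4 * π ^ 2 * a ^ 2 * (σ / Real.sqrt 2) ^ 2)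
            * Real.cos (2 * π * a * s z)
          + 8 * π ^ 2 * (-(2 * b * (σ / Real.sqrt 2))) * (σ / Real.sqrt 2) * a * (2 * r z - a) * Real.sin (2 * π * a * s z))
          * Real.exp (-π * (r z) ^ 2 - π * (r z - a) ^ 2)))
      +
      (σ * γ₁ * (16 * π ^ 2 * (r z) ^ 2 - 4 * π) * (σ / Real.sqrt 2) ^ 2 * Real.exp (-2 * π * (r z) ^ 2)
      + σ * γ₂ * (16 * π ^ 2 * (r z - a) ^ 2 - 4 * π) * (σ / Real.sqrt 2) ^ 2 * Real.exp (-2 * π * (r z - a) ^ 2)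
      + 2 * σ * Real.sqrt (γ₁ * γ₂) *
        (((-4 * π * (σ / Real.sqrt 2) ^ 2 + 4 * π ^ 2 * (σ / Real.sqrt 2) ^ 2 * (2 * r z - a) ^ 2 - 4 * π ^ 2 * a ^ 2 * (2 * b * (σ / Real.sqrt 2)) ^ 2)
            * Real.cos (2 * π * a * s z)
          + 8 * π ^ 2 * (σ / Real.sqrt 2) * (2 * b * (σ / Real.sqrt 2)) * a * (2 * r z - a) * Real.sin (2 * π * a * s z))
          * Real.exp (-π * (r z) ^ 2 - π * (r z - a) ^ 2))) := by
    simp only [laplacian, pderivRe, pderivIm]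
    rw [L1, L2]
  have hb : (0:ℝ) < 1 + 4 * b ^ 2 := by positivity
  have hσ2 : σ ^ 2 = 2 / (1 + 4 * b ^ 2) := by
    rw [hσ]; exact Real.sq_sqrt (by positivity)
  have hc2 : (σ / Real.sqrt 2) ^ 2 * (1 + 4 * b ^ 2) = 1 := by
    rw [div_pow, Real.sq_sqrt (by norm_num : (0:ℝ) ≤ 2), hσ2]
    field_simp
  have hQ1 : (2 * b * (σ / Real.sqrt 2)) ^ 2 + (σ / Real.sqrt 2) ^ 2 = 1 := by
    linear_combination hc2
  have key3 : laplacian S z / (4 * π) =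
      4 * π * σ * (γ₁ * (r z) ^ 2 * Real.exp (-2 * π * (r z) ^ 2)
        + γ₂ * (r z - a) ^ 2 * Real.exp (-2 * π * (r z - a) ^ 2)
        + 2 * Real.sqrt (γ₁ * γ₂) * (r z) * (r z - a)
          * Real.exp (-π * (r z) ^ 2 - π * (r z - a) ^ 2) * Real.cos (2 * π * a * s z)) - S z := by
    rw [hlap, div_eq_iff (by positivity : (4:ℝ) * π ≠ 0)]
    linear_combination (σ * γ₁ * (16 * π ^ 2 * (r z) ^ 2 - 4 * π) * Real.exp (-2 * π * (r z) ^ 2)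
      + σ * γ₂ * (16 * π ^ 2 * (r z - a) ^ 2 - 4 * π) * Real.exp (-2 * π * (r z - a) ^ 2)
      + 2 * σ * Real.sqrt (γ₁ * γ₂) * (-4 * π + 4 * π ^ 2 * (2 * r z - a) ^ 2 - 4 * π ^ 2 * a ^ 2)
        * Real.exp (-π * (r z) ^ 2 - π * (r z - a) ^ 2) * Real.cos (2 * π * a * s z)) * hQ1
      + (4 * π) * (hS z)
  rw [key3]
  ring
end
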